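/- (Gentle Operator Lemma) Let ρ be a density matrix and Λ an operator with 0 ≤ Λ ≤ I such that Tr[Λρ] ≥ 1 − ε for some ε > 0. Then ‖ρ − √Λ ρ √Λ‖₁ ≤ 2√ε. -/

import Mathlib

open Matrix BigOperators ComplexOrder

/-- The positive square root of a positive semidefinite matrix (Mathlib's former
`Matrix.PosSemidef.sqrt`, removed since; reinstated with its old definition). -/
noncomputable def Matrix.PosSemidef.sqrt {n 𝕜 : Type*} [Fintype n] [RCLike 𝕜] [DecidableEq n]
    {A : Matrix n n 𝕜} (hA : A.PosSemidef) : Matrix n n 𝕜 :=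
  hA.1.eigenvectorUnitary.1 * diagonal ((↑) ∘ (√·) ∘ hA.1.eigenvalues) *
  (star hA.1.eigenvectorUnitary : Matrix n n 𝕜)

noncomputable def traceNorm {n : Type*} [Fintype n] [DecidableEq n] (A : Matrix n n ℂ) : ℝ :=
  ((Matrix.posSemidef_conjTranspose_mul_self A).sqrt.trace).re

open scoped MatrixOrder in
lemma Matrix.PosSemidef.sqrt_eq_cfcSqrt {n : Type*} [Fintype n] [DecidableEq n]
    {A : Matrix n n ℂ} (hA : A.PosSemidef) : hA.sqrt = CFC.sqrt A := by
  rw [CFC.sqrt_eq_cfc, cfc_nnreal_eq_real _ A, hA.1.cfc_eq]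
  simp only [Matrix.IsHermitian.cfc, Matrix.PosSemidef.sqrt, Unitary.conjStarAlgAut_apply]
  congr 3
  funext i
  simp [max_eq_left (hA.eigenvalues_nonneg i)]

open scoped MatrixOrder in
lemma Matrix.PosSemidef.posSemidef_sqrt {n : Type*} [Fintype n] [DecidableEq n]
    {A : Matrix n n ℂ} (hA : A.PosSemidef) : hA.sqrt.PosSemidef := by
  rw [hA.sqrt_eq_cfcSqrt]
  exact (CFC.sqrt_nonneg A).posSemidef

open scoped MatrixOrder in
lemma Matrix.PosSemidef.sqrt_mul_self {n : Type*} [Fintype n] [DecidableEq n]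
    {A : Matrix n n ℂ} (hA : A.PosSemidef) : hA.sqrt * hA.sqrt = A := by
  rw [hA.sqrt_eq_cfcSqrt]
  exact CFC.sqrt_mul_sqrt_self A hA.nonneg

open scoped MatrixOrder in
lemma Matrix.PosSemidef.eq_sqrt_of_sq_eq {n : Type*} [Fintype n] [DecidableEq n]
    {B : Matrix n n ℂ} (hB : B.PosSemidef) (A : Matrix n n ℂ) {hA : A.PosSemidef}
    (h : B ^ 2 = A) : B = hA.sqrt := by
  rw [hA.sqrt_eq_cfcSqrt, eq_comm]
  exact CFC.sqrt_unique (by simpa [sq] using h) hB.nonneg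

section GentleAux

variable {n : Type*} [Fintype n] [DecidableEq n]

private lemma trace_conj' {V : Matrix n n ℂ} (hV : star V * V = 1) (X : Matrix n n ℂ) :
    (V * X * star V).trace = X.trace := by
  rw [Matrix.trace_mul_cycle, hV, one_mul]

private lemma conj_mul_conj' {V : Matrix n n ℂ} (hV : star V * V = 1) (a b : n → ℂ) :
    (V * diagonal a * star V) * (V * diagonal b * star V) = V * diagonal (a * b) * star V := by
  simp only [mul_assoc]
  rw [← mul_assoc (star V) V, hV, one_mul, ← mul_assoc (diagonal a), diagonal_mul_diagonal]
  rfl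

private lemma conj_psd' {V : Matrix n n ℂ} (d : n → ℝ) (hd : ∀ i, 0 ≤ d i) :
    (V * diagonal (fun i => (d i : ℂ)) * star V).PosSemidef := by
  have h : (Matrix.diagonal (fun i => (d i : ℂ))).PosSemidef :=
    Matrix.PosSemidef.diagonal (fun i => by simpa using hd i)
  simpa [star_eq_conjTranspose] using h.mul_mul_conjTranspose_same V

private lemma conj_herm' (V : Matrix n n ℂ) (d : n → ℝ) :
    (V * diagonal (fun i => (d i : ℂ)) * star V)ᴴ = V * diagonal (fun i => (d i : ℂ)) * star V := by
  simp [conjTranspose_mul, diagonal_conjTranspose, mul_assoc, Pi.star_def, Complex.conj_ofReal,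
    star_eq_conjTranspose, conjTranspose_conjTranspose]

private lemma re_trace_nonneg' {M : Matrix n n ℂ} (hM : M.PosSemidef) : 0 ≤ M.trace.re := by
  have h : ∀ i, 0 ≤ (M i i).re := by
    intro i
    have h := hM.re_dotProduct_nonneg (Pi.single i 1)
    simpa [dotProduct, Matrix.mulVec, Pi.single_apply, Finset.sum_ite_eq] using h
  rw [Matrix.trace, Complex.re_sum]
  exact Finset.sum_nonneg fun i _ => h i

private lemma trace_mul_re_nonneg' {A B : Matrix n n ℂ} (hA : A.PosSemidef) (hB : B.PosSemidef) :
    0 ≤ (A * B).trace.re := by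
  have h2 : (hA.sqrt * B * hA.sqrt).trace = (A * B).trace := by
    rw [Matrix.trace_mul_cycle, hA.sqrt_mul_self]
  rw [← h2]
  refine re_trace_nonneg' ?_
  have h3 := hB.conjTranspose_mul_mul_same hA.sqrt
  rwa [hA.posSemidef_sqrt.1.eq] at h3

private lemma trace_mul_mono' {A B C : Matrix n n ℂ} (hAB : (B - A).PosSemidef)
    (hC : C.PosSemidef) : (A * C).trace.re ≤ (B * C).trace.re := by
  have h := trace_mul_re_nonneg' hAB hC
  rw [sub_mul, Matrix.trace_sub, Complex.sub_re] at h
  linarith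

private lemma trace_CS' (X Y : Matrix n n ℂ) :
    (Xᴴ * Y).trace.re ≤ Real.sqrt (Xᴴ * X).trace.re * Real.sqrt (Yᴴ * Y).trace.re := by
  have key : ∀ Z W : Matrix n n ℂ, (Zᴴ * W).trace.re
      = ∑ p : n × n, ((starRingEnd ℂ) (Z p.1 p.2) * W p.1 p.2).re := by
    intro Z W
    have e : ∑ p : n × n, ((starRingEnd ℂ) (Z p.1 p.2) * W p.1 p.2).re
        = ∑ i : n, ∑ j : n, ((starRingEnd ℂ) (Z i j) * W i j).re := by
      rw [← Finset.univ_product_univ, Finset.sum_product]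
    rw [e, Matrix.trace, Complex.re_sum]
    simp only [Matrix.diag_apply, Matrix.mul_apply, Matrix.conjTranspose_apply, Complex.re_sum]
    rw [Finset.sum_comm]
    rfl
  have habs : ∀ Z : Matrix n n ℂ, (Zᴴ * Z).trace.re
      = ∑ p : n × n, norm (Z p.1 p.2) ^ 2 := by
    intro Z
    rw [key]
    refine Finset.sum_congr rfl fun p _ => ?_
    rw [Complex.sq_norm]
    simp [Complex.normSq_apply, Complex.mul_re]
  rw [key, habs, habs]
  calc (∑ p : n × n, ((starRingEnd ℂ) (X p.1 p.2) * Y p.1 p.2).re)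
      ≤ ∑ p : n × n, norm (X p.1 p.2) * norm (Y p.1 p.2) := by
        refine Finset.sum_le_sum fun p _ => ?_
        calc ((starRingEnd ℂ) (X p.1 p.2) * Y p.1 p.2).re
            ≤ norm ((starRingEnd ℂ) (X p.1 p.2) * Y p.1 p.2) := Complex.re_le_norm _
          _ = norm (X p.1 p.2) * norm (Y p.1 p.2) := by
              rw [norm_mul, Complex.norm_conj]
    _ ≤ Real.sqrt (∑ p : n × n, norm (X p.1 p.2) ^ 2) *
        Real.sqrt (∑ p : n × n, norm (Y p.1 p.2) ^ 2) :=
        Real.sum_mul_le_sqrt_mul_sqrt _ _ _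

private lemma eigenvalues_le_one' {Λ : Matrix n n ℂ} (hΛ : Λ.PosSemidef)
    (hΛle : (1 - Λ).PosSemidef) (i : n) : hΛ.1.eigenvalues i ≤ 1 := by
  set v : n → ℂ := ⇑(hΛ.1.eigenvectorBasis i) with hv
  have hnorm : dotProduct (star v) v = 1 := by
    have h2 : (inner ℂ (hΛ.1.eigenvectorBasis i) (hΛ.1.eigenvectorBasis i) : ℂ) = 1 := by
      rw [inner_self_eq_norm_sq_to_K, hΛ.1.eigenvectorBasis.orthonormal.1 i]
      norm_num
    rw [← h2, EuclideanSpace.inner_eq_star_dotProduct, dotProduct_comm]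
  have hmv : Λ *ᵥ v = hΛ.1.eigenvalues i • v := hΛ.1.mulVec_eigenvectorBasis i
  have h0 := hΛle.re_dotProduct_nonneg v
  rw [Matrix.sub_mulVec, Matrix.one_mulVec, hmv, dotProduct_sub, dotProduct_smul,
    hnorm] at h0
  simp [Complex.real_smul] at h0
  linarith

/-- Facts about the positive square root of `Λ` when `0 ≤ Λ ≤ 1`. -/
private lemma sqrt_facts' {Λ : Matrix n n ℂ} (hΛ : Λ.PosSemidef) (hΛle : (1 - Λ).PosSemidef) :
    (1 - hΛ.sqrt).PosSemidef ∧
      ((1 - Λ) - (1 - hΛ.sqrt) * (1 - hΛ.sqrt)).PosSemidef := by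
  have hU : star (hΛ.1.eigenvectorUnitary : Matrix n n ℂ) *
      (hΛ.1.eigenvectorUnitary : Matrix n n ℂ) = 1 :=
    Matrix.mem_unitaryGroup_iff'.mp (hΛ.1.eigenvectorUnitary).2
  have hU' : (hΛ.1.eigenvectorUnitary : Matrix n n ℂ) *
      star (hΛ.1.eigenvectorUnitary : Matrix n n ℂ) = 1 :=
    Matrix.mem_unitaryGroup_iff.mp (hΛ.1.eigenvectorUnitary).2
  set U : Matrix n n ℂ := (hΛ.1.eigenvectorUnitary : Matrix n n ℂ) with hUdef
  have hμ0 : ∀ i, 0 ≤ hΛ.1.eigenvalues i := fun i => hΛ.eigenvalues_nonneg i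
  have hμ1 : ∀ i, hΛ.1.eigenvalues i ≤ 1 := eigenvalues_le_one' hΛ hΛle
  have hS_eq : hΛ.sqrt
      = U * diagonal (fun i => ((Real.sqrt (hΛ.1.eigenvalues i) : ℝ) : ℂ)) * star U := rfl
  have hΛ_eq : Λ = U * diagonal (fun i => ((hΛ.1.eigenvalues i : ℝ) : ℂ)) * star U :=
    hΛ.1.spectral_theorem
  have hone : (1 : Matrix n n ℂ) = U * diagonal (fun _ : n => ((1 : ℝ) : ℂ)) * star U := by
    have hd : diagonal (fun _ : n => ((1:ℝ):ℂ)) = (1 : Matrix n n ℂ) := by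
      rw [← Matrix.diagonal_one]
      norm_num
    rw [hd, mul_one, hU']
  have conjdiff : ∀ a b : n → ℝ,
      (U * diagonal (fun i => ((a i : ℝ):ℂ)) * star U) -
        (U * diagonal (fun i => ((b i : ℝ):ℂ)) * star U)
      = U * diagonal (fun i => ((a i - b i : ℝ):ℂ)) * star U := by
    intro a b
    rw [← sub_mul, ← mul_sub, Matrix.diagonal_sub]
    congr 2
    funext i
    push_cast
    ring
  have h1S : (1 - hΛ.sqrt).PosSemidef := by
    rw [hone, hS_eq, conjdiff]
    exact conj_psd' _ fun i => by
      have := Real.sqrt_le_one.mpr (hμ1 i)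
      linarith
  refine ⟨h1S, ?_⟩
  have hSmΛ : (hΛ.sqrt - Λ).PosSemidef := by
    have e := conjdiff (fun i => Real.sqrt (hΛ.1.eigenvalues i)) hΛ.1.eigenvalues
    rw [← hS_eq, ← hΛ_eq] at e
    rw [e]
    refine conj_psd' _ fun i => ?_
    have h1 := Real.sq_sqrt (hμ0 i)
    have h2 := Real.sqrt_nonneg (hΛ.1.eigenvalues i)
    have h3 := Real.sqrt_le_one.mpr (hμ1 i)
    nlinarith
  have expand : (1 - Λ) - (1 - hΛ.sqrt) * (1 - hΛ.sqrt) = (hΛ.sqrt - Λ) + (hΛ.sqrt - Λ) := by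
    have e : (1 - hΛ.sqrt) * (1 - hΛ.sqrt) = 1 - hΛ.sqrt - hΛ.sqrt + hΛ.sqrt * hΛ.sqrt := by
      noncomm_ring
    rw [e, hΛ.sqrt_mul_self]
    abel
  rw [expand]
  exact hSmΛ.add hSmΛ

/-- The trace norm of a Hermitian matrix is witnessed by a self-adjoint involution. -/
private lemma traceNorm_eq_sign' (D : Matrix n n ℂ) (hD : D.IsHermitian) :
    ∃ K : Matrix n n ℂ, Kᴴ = K ∧ K * K = 1 ∧ traceNorm D = (K * D).trace.re := by
  have hV : star (hD.eigenvectorUnitary : Matrix n n ℂ) *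
      (hD.eigenvectorUnitary : Matrix n n ℂ) = 1 :=
    Matrix.mem_unitaryGroup_iff'.mp (hD.eigenvectorUnitary).2
  have hV' : (hD.eigenvectorUnitary : Matrix n n ℂ) *
      star (hD.eigenvectorUnitary : Matrix n n ℂ) = 1 :=
    Matrix.mem_unitaryGroup_iff.mp (hD.eigenvectorUnitary).2
  set V : Matrix n n ℂ := (hD.eigenvectorUnitary : Matrix n n ℂ) with hVdef
  set lam := hD.eigenvalues with hlamdef
  have hD_eq : D = V * diagonal (fun i => ((lam i : ℝ):ℂ)) * star V := hD.spectral_theorem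
  classical
  refine ⟨V * diagonal (fun i => (((if 0 ≤ lam i then 1 else -1 : ℝ)) : ℂ)) * star V,
    conj_herm' V _, ?_, ?_⟩
  · rw [conj_mul_conj' hV]
    have hd : ((fun i => (((if 0 ≤ lam i then 1 else -1 : ℝ)) : ℂ)) *
        fun i => (((if 0 ≤ lam i then 1 else -1 : ℝ)) : ℂ)) = fun _ : n => (1:ℂ) := by
      funext i
      simp only [Pi.mul_apply]
      by_cases hc : 0 ≤ lam i <;> simp [hc]
    rw [hd]
    have hd1 : diagonal (fun _ : n => (1:ℂ)) = (1 : Matrix n n ℂ) := Matrix.diagonal_one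
    rw [hd1, mul_one, hV']
  · have hKD : (V * diagonal (fun i => (((if 0 ≤ lam i then 1 else -1 : ℝ)) : ℂ)) * star V) * D
        = V * diagonal (fun i => ((|lam i| : ℝ):ℂ)) * star V := by
      conv_lhs => rw [hD_eq]
      rw [conj_mul_conj' hV]
      have hd : ((fun i => (((if 0 ≤ lam i then 1 else -1 : ℝ)) : ℂ)) *
          fun i => ((lam i : ℝ):ℂ)) = fun i => ((|lam i| : ℝ):ℂ) := by
        funext i
        simp only [Pi.mul_apply]
        norm_cast
        by_cases hc : 0 ≤ lam i
        · simp [hc, abs_of_nonneg hc]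
        · push_neg at hc
          simp [not_le.mpr hc, abs_of_neg hc]
      rw [hd]
    rw [hKD]
    have hP : (V * diagonal (fun i => ((|lam i| : ℝ):ℂ)) * star V).PosSemidef :=
      conj_psd' _ fun i => abs_nonneg _
    have hPsq : (V * diagonal (fun i => ((|lam i| : ℝ):ℂ)) * star V) ^ 2 = Dᴴ * D := by
      rw [pow_two, conj_mul_conj' hV, hD.eq]
      conv_rhs => rw [hD_eq]
      rw [conj_mul_conj' hV]
      have hd : ((fun i => ((|lam i| : ℝ):ℂ)) * fun i => ((|lam i| : ℝ):ℂ))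
          = ((fun i => ((lam i : ℝ):ℂ)) * fun i => ((lam i : ℝ):ℂ)) := by
        funext i
        simp only [Pi.mul_apply]
        norm_cast
        exact abs_mul_abs_self _
      rw [hd]
    have hsqrt : V * diagonal (fun i => ((|lam i| : ℝ):ℂ)) * star V
        = (Matrix.posSemidef_conjTranspose_mul_self D).sqrt :=
      hP.eq_sqrt_of_sq_eq _ hPsq
    rw [traceNorm, ← hsqrt]

/-- Abstract version of the gentle operator lemma. -/
private lemma gentle_aux
    (ε : ℝ) (hε : 0 < ε)
    (ρ Λ S R : Matrix n n ℂ)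
    (hρ : ρ.PosSemidef) (hρtr : ρ.trace = 1)
    (hΛle : (1 - Λ).PosSemidef)
    (h : 1 - ε ≤ ((Λ * ρ).trace).re)
    (hS : S.PosSemidef) (hSS : S * S = Λ)
    (hR : R.PosSemidef) (hRR : R * R = ρ)
    (h1S : (1 - S).PosSemidef)
    (hkey : ((1 - Λ) - (1 - S) * (1 - S)).PosSemidef) :
    traceNorm (ρ - S * ρ * S) ≤ 2 * Real.sqrt ε := by
  have hSρS : (S * ρ * S).PosSemidef := by
    have h3 := hρ.conjTranspose_mul_mul_same S
    rwa [hS.1.eq] at h3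
  have hD : (ρ - S * ρ * S).IsHermitian := hρ.1.sub hSρS.1
  obtain ⟨K, hK, hKK, htn⟩ := traceNorm_eq_sign' (ρ - S * ρ * S) hD
  have h1Sh : (1 - S)ᴴ = 1 - S := h1S.1.eq
  -- decomposition
  have htrace_split : (K * (ρ - S * ρ * S)).trace.re
      = (K * ((1 - S) * ρ)).trace.re + (K * (S * ρ * (1 - S))).trace.re := by
    rw [show ρ - S * ρ * S = (1 - S) * ρ + S * ρ * (1 - S) from by noncomm_ring,
      mul_add, Matrix.trace_add, Complex.add_re]
  -- bound for ((1-S)R)ᴴ((1-S)R)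
  have hYY : (((1 - S) * R)ᴴ * ((1 - S) * R)).trace.re ≤ ε := by
    have e1 : ((1 - S) * R)ᴴ * ((1 - S) * R) = R * ((1 - S) * (1 - S) * R) := by
      rw [conjTranspose_mul, h1Sh, hR.1.eq]
      noncomm_ring
    rw [e1, Matrix.trace_mul_comm]
    have e2 : (1 - S) * (1 - S) * R * R = (1 - S) * (1 - S) * ρ := by
      rw [mul_assoc, hRR]
    rw [e2]
    have hb : ((1 - S) * (1 - S) * ρ).trace.re ≤ ((1 - Λ) * ρ).trace.re :=
      trace_mul_mono' hkey hρ
    have hb2 : ((1 - Λ) * ρ).trace.re = 1 - (Λ * ρ).trace.re := by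
      rw [sub_mul, one_mul, Matrix.trace_sub, Complex.sub_re, hρtr]
      norm_num
    linarith
  -- bound for (KR)ᴴ(KR)
  have hXX : ((K * R)ᴴ * (K * R)).trace.re = 1 := by
    have e1 : (K * R)ᴴ * (K * R) = R * (K * K) * R := by
      rw [conjTranspose_mul, hK, hR.1.eq]
      noncomm_ring
    rw [e1, hKK, mul_one, hRR, hρtr]
    norm_num
  -- bound for (K(SR))ᴴ(K(SR))
  have hZZ : ((K * (S * R))ᴴ * (K * (S * R))).trace.re ≤ 1 := by
    have e1 : (K * (S * R))ᴴ * (K * (S * R)) = R * S * (K * K) * (S * R) := by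
      rw [conjTranspose_mul, hK, conjTranspose_mul, hS.1.eq, hR.1.eq]
      noncomm_ring
    rw [e1, hKK, mul_one]
    have e2 : R * S * (S * R) = R * (Λ * R) := by
      rw [← hSS]; noncomm_ring
    rw [e2, Matrix.trace_mul_comm, mul_assoc, hRR]
    have hub : 0 ≤ ((1 - Λ) * ρ).trace.re := trace_mul_re_nonneg' hΛle hρ
    rw [sub_mul, one_mul, Matrix.trace_sub, Complex.sub_re, hρtr] at hub
    simp only [Complex.one_re] at hub
    linarith
  -- term 1
  have hT1 : (K * ((1 - S) * ρ)).trace.re ≤ Real.sqrt ε := by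
    have t1 : (K * ((1 - S) * ρ)).trace = ((K * R)ᴴ * ((1 - S) * R)).trace := by
      rw [conjTranspose_mul, hK, hR.1.eq, ← hRR]
      rw [show R * K * ((1 - S) * R) = R * (K * ((1 - S) * R)) from by rw [mul_assoc]]
      rw [Matrix.trace_mul_comm R (K * ((1 - S) * R))]
      congr 1
      noncomm_ring
    rw [t1]
    calc ((K * R)ᴴ * ((1 - S) * R)).trace.re
        ≤ Real.sqrt ((K * R)ᴴ * (K * R)).trace.re *
          Real.sqrt (((1 - S) * R)ᴴ * ((1 - S) * R)).trace.re := trace_CS' _ _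
      _ ≤ Real.sqrt 1 * Real.sqrt ε :=
          mul_le_mul (Real.sqrt_le_sqrt (le_of_eq hXX)) (Real.sqrt_le_sqrt hYY)
            (Real.sqrt_nonneg _) (Real.sqrt_nonneg _)
      _ = Real.sqrt ε := by rw [Real.sqrt_one, one_mul]
  -- term 2
  have hT2 : (K * (S * ρ * (1 - S))).trace.re ≤ Real.sqrt ε := by
    have t2 : (K * (S * ρ * (1 - S))).trace = (((1 - S) * R)ᴴ * (K * (S * R))).trace := by
      rw [conjTranspose_mul, h1Sh, hR.1.eq, ← hRR]
      rw [show R * (1 - S) * (K * (S * R)) = R * ((1 - S) * (K * (S * R))) from by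
        rw [mul_assoc]]
      rw [Matrix.trace_mul_comm R ((1 - S) * (K * (S * R)))]
      rw [show K * (S * (R * R) * (1 - S)) = (K * (S * (R * R))) * (1 - S) from by noncomm_ring]
      rw [Matrix.trace_mul_comm (K * (S * (R * R))) (1 - S)]
      congr 1
      noncomm_ring
    rw [t2]
    calc (((1 - S) * R)ᴴ * (K * (S * R))).trace.re
        ≤ Real.sqrt (((1 - S) * R)ᴴ * ((1 - S) * R)).trace.re *
          Real.sqrt ((K * (S * R))ᴴ * (K * (S * R))).trace.re := trace_CS' _ _
      _ ≤ Real.sqrt ε * Real.sqrt 1 :=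
          mul_le_mul (Real.sqrt_le_sqrt hYY) (Real.sqrt_le_sqrt hZZ)
            (Real.sqrt_nonneg _) (Real.sqrt_nonneg _)
      _ = Real.sqrt ε := by rw [Real.sqrt_one, mul_one]
  rw [htn, htrace_split]
  linarith

end GentleAux

/-- Gentle Operator Lemma: if `0 ≤ Λ ≤ I` and `Tr[Λρ] ≥ 1 - ε`
then `‖ρ - √Λ ρ √Λ‖₁ ≤ 2√ε`. -/
theorem gentle_operator_lemma {n : Type*} [Fintype n] [DecidableEq n]
    (ε : ℝ) (hε : 0 < ε)
    (ρ : Matrix n n ℂ) (hρ : ρ.PosSemidef) (hρtr : ρ.trace = 1)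
    (Λ : Matrix n n ℂ) (hΛ : Λ.PosSemidef) (hΛle : (1 - Λ).PosSemidef)
    (h : 1 - ε ≤ ((Λ * ρ).trace).re) :
    traceNorm (ρ - hΛ.sqrt * ρ * hΛ.sqrt) ≤ 2 * Real.sqrt ε := by
  obtain ⟨h1S, hkey⟩ := sqrt_facts' hΛ hΛle
  exact gentle_aux ε hε ρ Λ hΛ.sqrt hρ.sqrt hρ hρtr hΛle h hΛ.posSemidef_sqrt
    hΛ.sqrt_mul_self hρ.posSemidef_sqrt hρ.sqrt_mul_self h1S hkey
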